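/- If A is a 2×2 complex matrix with exp(A) = M where M is not diagonalizable and the unique eigenvalue of M is -1, then trace(A) ≠ 0. -/

import Mathlib

open Polynomial Matrix

/-- A square complex matrix is diagonalizable if it is similar to a diagonal matrix. -/
def Matrix.IsDiagonalizable {n : Type*} [Fintype n] [DecidableEq n]
    (M : Matrix n n ℂ) : Prop :=
  ∃ P : Matrix n n ℂ, IsUnit P ∧ (P⁻¹ * M * P).IsDiag

noncomputable def ca (δ : ℂ) : ℂ := ∑' k : ℕ, ((2 * k).factorial : ℂ)⁻¹ * δ ^ k
noncomputable def cb (δ : ℂ) : ℂ := ∑' k : ℕ, ((2 * k + 1).factorial : ℂ)⁻¹ * δ ^ k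

lemma summable_aux (δ : ℂ) (m : ℕ → ℕ) (hm : ∀ k, k ≤ m k) :
    Summable fun k : ℕ => ((m k).factorial : ℂ)⁻¹ * δ ^ k := by
  have hg : Summable fun k : ℕ => (k.factorial : ℝ)⁻¹ * ‖δ‖ ^ k := by
    simpa [div_eq_inv_mul] using Real.summable_pow_div_factorial ‖δ‖
  refine Summable.of_norm_bounded hg (fun k => ?_)
  simp only [norm_mul, norm_inv, norm_pow, Complex.norm_natCast]
  have h1 : ((k.factorial : ℝ)) ≤ ((m k).factorial : ℝ) := by
    exact_mod_cast Nat.factorial_le (hm k)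
  have h2 : (0 : ℝ) < k.factorial := by positivity
  exact mul_le_mul_of_nonneg_right (by gcongr) (by positivity)

lemma ca_zero : ca 0 = 1 := by
  rw [ca, tsum_eq_single 0 (fun k hk => by simp [zero_pow hk])]
  simp

lemma exp_of_sq (A : Matrix (Fin 2) (Fin 2) ℂ) (δ : ℂ) (hA2 : A ^ 2 = δ • 1) :
    NormedSpace.exp A = ca δ • 1 + cb δ • A := by
  have hev : ∀ k : ℕ, (((2 * k).factorial : ℂ))⁻¹ • A ^ (2 * k)
      = (((2 * k).factorial : ℂ)⁻¹ * δ ^ k) • (1 : Matrix (Fin 2) (Fin 2) ℂ) := by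
    intro k
    rw [pow_mul, hA2, _root_.smul_pow, one_pow, smul_smul]
  have hod : ∀ k : ℕ, (((2 * k + 1).factorial : ℂ))⁻¹ • A ^ (2 * k + 1)
      = (((2 * k + 1).factorial : ℂ)⁻¹ * δ ^ k) • A := by
    intro k
    rw [pow_succ, pow_mul, hA2, _root_.smul_pow, one_pow, smul_mul_assoc, one_mul, smul_smul]
  have hse : HasSum (fun k : ℕ => (((2 * k).factorial : ℂ))⁻¹ • A ^ (2 * k))
      (ca δ • (1 : Matrix (Fin 2) (Fin 2) ℂ)) := by
    simp only [hev]
    exact ((summable_aux δ _ (fun k => by omega)).hasSum).smul_const _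
  have hso : HasSum (fun k : ℕ => (((2 * k + 1).factorial : ℂ))⁻¹ • A ^ (2 * k + 1))
      (cb δ • A) := by
    simp only [hod]
    exact ((summable_aux δ _ (fun k => by omega)).hasSum).smul_const _
  have h1 := HasSum.even_add_odd (f := fun n : ℕ => ((n.factorial : ℂ))⁻¹ • A ^ n) hse hso
  rw [NormedSpace.exp_eq_tsum (𝕂 := ℂ)]
  exact h1.tsum_eq

theorem stmt11 (A M : Matrix (Fin 2) (Fin 2) ℂ)
    (hexp : NormedSpace.exp A = M)
    (hM : ¬ M.IsDiagonalizable)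
    (heig : M.charpoly = (X - C (-1)) ^ 2) :
    Matrix.trace A ≠ 0 := by
  intro htr
  -- trace zero gives A 1 1 = - A 0 0
  have h11 : A 1 1 = -A 0 0 := by
    have h := htr
    simp only [Matrix.trace, Matrix.diag, Fin.sum_univ_two] at h
    linear_combination h
  set δ : ℂ := -A.det with hδ
  have hA2 : A ^ 2 = δ • 1 := by
    ext i j
    fin_cases i <;> fin_cases j <;>
      simp [pow_two, Matrix.mul_apply, Fin.sum_univ_two, Matrix.det_fin_two, Matrix.one_apply,
        h11, hδ] <;> ring
  have hMab : M = ca δ • 1 + cb δ • A := by rw [← hexp, exp_of_sq A δ hA2]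
  -- scalar matrices are diagonalizable
  have hscalar : ∀ c : ℂ, M ≠ c • 1 := by
    intro c hc
    exact hM ⟨1, isUnit_one, by
      rw [inv_one, one_mul, mul_one, hc]
      intro i j hij
      simp [Matrix.one_apply_ne hij]⟩
  -- A is not scalar
  have hAns : ∀ c : ℂ, A ≠ c • 1 := by
    intro c hc
    refine hscalar (ca δ + cb δ * c) ?_
    rw [hMab, hc, smul_smul, add_smul]
  -- 1 and A are independent
  have hindep : ∀ α β : ℂ, α • (1 : Matrix (Fin 2) (Fin 2) ℂ) + β • A = 0 → α = 0 ∧ β = 0 := by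
    intro α β h
    by_cases hb : β = 0
    · subst hb
      refine ⟨?_, rfl⟩
      have := congrFun (congrFun h 0) 0
      simpa using this
    · exfalso
      have h2 : β • A = (-α) • (1 : Matrix (Fin 2) (Fin 2) ℂ) := by
        linear_combination (norm := module) h
      have hA : A = (β⁻¹ * -α) • (1 : Matrix (Fin 2) (Fin 2) ℂ) := by
        have h3 := congrArg (β⁻¹ • ·) h2
        simpa [smul_smul, inv_smul_smul₀ hb] using h3
      exact hAns _ hA
  -- Cayley–Hamilton for M
  have hN2 : (M + 1) ^ 2 = 0 := by
    have h := Matrix.aeval_self_charpoly M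
    rw [heig] at h
    simpa [sub_neg_eq_add] using h
  have hMul : A * A = δ • 1 := by rw [← pow_two, hA2]
  have hexpand : ((ca δ + 1) • (1 : Matrix (Fin 2) (Fin 2) ℂ) + cb δ • A) ^ 2
      = ((ca δ + 1) ^ 2 + cb δ ^ 2 * δ) • 1 + (2 * (ca δ + 1) * cb δ) • A := by
    rw [pow_two]
    simp only [add_mul, mul_add, smul_mul_assoc, mul_smul_comm, smul_smul, one_mul, mul_one, hMul,
      smul_smul]
    module
  have hsum : ((ca δ + 1) ^ 2 + cb δ ^ 2 * δ) • (1 : Matrix (Fin 2) (Fin 2) ℂ)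
      + (2 * (ca δ + 1) * cb δ) • A = 0 := by
    rw [← hexpand]
    have : M + 1 = (ca δ + 1) • (1 : Matrix (Fin 2) (Fin 2) ℂ) + cb δ • A := by
      rw [hMab]; module
    rw [← this, hN2]
  obtain ⟨h1, h2⟩ := hindep _ _ hsum
  have hb : cb δ ≠ 0 := by
    intro hb
    exact hscalar (ca δ) (by rw [hMab, hb, zero_smul, add_zero])
  have ha : ca δ + 1 = 0 := by
    rcases mul_eq_zero.mp h2 with h | h
    · rcases mul_eq_zero.mp h with h' | h'
      · norm_num at h'
      · exact h'
    · exact absurd h hb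
  have hδ0 : δ = 0 := by
    have : cb δ ^ 2 * δ = 0 := by
      have := h1
      rw [ha] at this
      simpa using this
    rcases mul_eq_zero.mp this with h | h
    · exact absurd (pow_eq_zero_iff (by norm_num) |>.mp h) hb
    · exact h
  rw [hδ0, ca_zero] at ha
  norm_num at ha
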